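/- arXiv:1306.1242 — 5 statements merged into one kernel-verified Lean document; each statement's English description precedes it below -/
import Mathlib

section
/- Let k be an algebraically closed field of characteristic zero and n ≥ 1. Two semisimple (diagonalizable) elements x and y of GSp_{2n}(k) are conjugate by an element of GSp_{2n}(k) if and only if they have the same symplectic multiplier ν(x) = ν(y) and are conjugate by an element of GL_{2n}(k). -/
open Matrix

noncomputable section

/-- 2n×2n matrices, indexed by `Fin n ⊕ Fin n`. -/
abbrev Mat (n : ℕ) (k : Type*) := Matrix (Fin n ⊕ Fin n) (Fin n ⊕ Fin n) k

/-- The standard symplectic form matrix `J_{2n} = [[0, 1], [-1, 0]]`. -/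
def Jmat (n : ℕ) (k : Type*) [Field k] : Mat n k := fromBlocks 0 1 (-1) 0

/-- `A ∈ GSp_{2n}(k)` with symplectic multiplier `ν`. -/
def inGSp {k : Type*} [Field k] (n : ℕ) (A : Mat n k) (ν : k) : Prop :=
  IsUnit A.det ∧ ν ≠ 0 ∧ Aᵀ * Jmat n k * A = ν • Jmat n k

/-- A square matrix is semisimple (diagonalizable over `k`). -/
def IsDiagonalizable {k : Type*} [Field k] {m : Type*} [Fintype m] [DecidableEq m]
    (A : Matrix m m k) : Prop :=
  ∃ (P : Matrix m m k) (d : m → k), IsUnit P.det ∧ A = P * Matrix.diagonal d * P⁻¹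


section Helpers

set_option linter.unusedSectionVars false

open Polynomial


open Polynomial

variable {k : Type*} [Field k] [IsAlgClosed k] [CharZero k]

lemma coprime_of_no_common_root {p f : k[X]} (hf : f ≠ 0)
    (h : ∀ t : k, f.eval t = 0 → p.eval t ≠ 0) : IsCoprime p f := by
  classical
  rw [← EuclideanDomain.gcd_isUnit_iff]
  by_contra hu
  have hd0 : EuclideanDomain.gcd p f ≠ 0 := fun h0 =>
    hf ((EuclideanDomain.gcd_eq_zero_iff).1 h0).2
  have hdeg : (EuclideanDomain.gcd p f).degree ≠ 0 := fun hdeg =>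
    hu (Polynomial.isUnit_iff_degree_eq_zero.2 hdeg)
  obtain ⟨t, ht⟩ := IsAlgClosed.exists_root _ hdeg
  obtain ⟨e, he⟩ := EuclideanDomain.gcd_dvd_left p f
  obtain ⟨e', he'⟩ := EuclideanDomain.gcd_dvd_right p f
  have hft : f.eval t = 0 := by rw [he', eval_mul, ht, zero_mul]
  have hpt : p.eval t = 0 := by rw [he, eval_mul, ht, zero_mul]
  exact h t hft hpt

lemma exists_sqrt_poly {f : k[X]} (hf : f ≠ 0) (h0 : ¬ X ∣ f) :
    ∃ q : k[X], f ∣ q * q - X := by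
  classical
  by_cases hN : f.natDegree = 0
  · have : f = C (f.coeff 0) := Polynomial.eq_C_of_natDegree_eq_zero hN
    have hc : f.coeff 0 ≠ 0 := by intro h; apply hf; rw [this, h, map_zero]
    have hu : IsUnit f := by rw [this]; exact isUnit_C.2 hc.isUnit
    exact ⟨0, hu.dvd⟩
  have hsplit : f.Splits := IsAlgClosed.splits f
  set S : Finset k := f.roots.toFinset with hS
  set g : k[X] := ∏ t ∈ S, (X - C t) with hg
  -- roots are nonzero
  have hroot0 : ∀ t ∈ S, t ≠ 0 := by
    intro t ht h0t
    apply h0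
    rw [X_dvd_iff, coeff_zero_eq_eval_zero]
    have := (Polynomial.mem_roots hf).1 (Multiset.mem_toFinset.1 ht)
    rw [h0t] at this
    exact this
  -- square root function
  have hr : ∀ t : k, ∃ z : k, z ^ 2 = t := fun t =>
    IsAlgClosed.exists_pow_nat_eq t (n := 2) two_pos
  choose r hrs using hr
  have hr2 : ∀ t : k, r t * r t = t := fun t => by rw [← pow_two]; exact hrs t
  -- eval of g at roots is zero
  have hgz : ∀ t ∈ S, g.eval t = 0 := by
    intro t ht
    rw [hg, Polynomial.eval_prod]
    exact Finset.prod_eq_zero ht (by simp)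
  -- base interpolation polynomial
  set q₀ : k[X] := Lagrange.interpolate S id (fun t => r t) with hq₀
  have heval : ∀ t ∈ S, q₀.eval t = r t := by
    intro t ht
    exact Lagrange.eval_interpolate_at_node _ (Set.injOn_id _) ht
  have hmemS : ∀ t : k, f.eval t = 0 → t ∈ S := by
    intro t ht
    exact Multiset.mem_toFinset.2 ((Polynomial.mem_roots hf).2 ht)
  have hq₀f : IsCoprime q₀ f := by
    apply coprime_of_no_common_root hf
    intro t ht
    have htS := hmemS t ht
    rw [heval t htS]
    intro h0t
    exact hroot0 t htS (by rw [← hr2 t, h0t, mul_zero])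
  have hgdvd : g ∣ q₀ * q₀ - X := by
    apply Finset.prod_dvd_of_coprime
    · exact (Polynomial.pairwise_coprime_X_sub_C Function.injective_id).set_pairwise _
    · intro t ht
      rw [Polynomial.dvd_iff_isRoot]
      have : eval t (q₀ * q₀ - X) = 0 := by
        rw [eval_sub, eval_mul, eval_X, heval t ht, hr2, sub_self]
      exact this
  -- f divides g ^ natDegree
  have hfg : f ∣ g ^ f.natDegree := by
    have hfe := Splits.eq_prod_roots hsplit
    have hlc : IsUnit (C f.leadingCoeff) :=
      isUnit_C.2 (Polynomial.leadingCoeff_ne_zero.2 hf).isUnit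
    have key : (f.roots.map fun a => X - C a).prod ∣ g ^ f.natDegree := by
      rw [Finset.prod_multiset_map_count, hg, ← Finset.prod_pow]
      exact Finset.prod_dvd_prod_of_dvd _ _ (fun t _ => pow_dvd_pow _
        ((Multiset.count_le_card _ _).trans f.card_roots'))
    exact dvd_trans (dvd_of_eq hfe) ((hlc.mul_left_dvd).2 key)
  -- Newton doubling step
  have step : ∀ j : ℕ, 1 ≤ j →
      (∃ q a : k[X], IsCoprime q f ∧ f ∣ (q * q - X - a * g ^ j)) →
      ∃ q a : k[X], IsCoprime q f ∧ f ∣ (q * q - X - a * g ^ (2 * j)) := by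
    rintro j hj ⟨q, a, hqf, hdvd⟩
    obtain ⟨u, v, huv⟩ := hqf
    set w : k[X] := C (2⁻¹ : k) * u with hw
    have h2w : 2 * w = u := by
      rw [hw, ← mul_assoc]
      have h2 : (2 : k[X]) = C (2 : k) := (map_ofNat C 2).symm
      rw [h2, ← C_mul, mul_inv_cancel₀ (two_ne_zero), C_1, one_mul]
    obtain ⟨c, hc⟩ := hdvd
    have hEe : q * q - X = a * g ^ j + f * c := by linear_combination hc
    refine ⟨q - w * (q * q - X), w * w * a * a, ?_, ?_⟩
    · apply coprime_of_no_common_root hf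
      intro t ht
      have htS := hmemS t ht
      have hE : eval t (q * q - X) = 0 := by
        rw [hEe, eval_add, eval_mul, eval_mul, eval_pow, hgz t htS, ht]
        simp [zero_pow (by omega : j ≠ 0)]
      rw [eval_sub, eval_mul, hE, mul_zero, sub_zero]
      intro hq0
      have h1 := congrArg (eval t) huv
      rw [eval_add, eval_mul, eval_mul, ht, mul_zero, add_zero, hq0, mul_zero,
        eval_one] at h1
      exact zero_ne_one h1
    · refine ⟨(q * q - X) * v + w * w * c * ((q * q - X) + a * g ^ j), ?_⟩
      rw [two_mul, pow_add]
      linear_combination (X - q * q) * huv + (X - q * q) * q * h2w +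
        (w * w * (q * q - X + a * g ^ j)) * hc
  -- iterate the doubling
  have main : ∀ s : ℕ, ∃ q a : k[X], IsCoprime q f ∧ f ∣ (q * q - X - a * g ^ (2 ^ s)) := by
    intro s
    induction s with
    | zero =>
      obtain ⟨a, ha⟩ := hgdvd
      refine ⟨q₀, a, hq₀f, ?_⟩
      rw [pow_zero, pow_one, ha, mul_comm, sub_self]
      exact dvd_zero f
    | succ s ih =>
      have h2s := step (2 ^ s) Nat.one_le_two_pow ih
      rwa [← pow_succ'] at h2s
  obtain ⟨q, a, hqf, hdvd⟩ := main f.natDegree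
  refine ⟨q, ?_⟩
  have h1 : f ∣ a * g ^ (2 ^ f.natDegree) :=
    Dvd.dvd.mul_left (hfg.trans (pow_dvd_pow g (Nat.le_of_lt (Nat.lt_two_pow_self)))) a
  have h2 := dvd_add hdvd h1
  rwa [sub_add_cancel] at h2

open Matrix in
lemma commute_aeval {m : Type*} [Fintype m] [DecidableEq m]
    (x M : Matrix m m k) (h : x * M = M * x) (q : k[X]) :
    x * Polynomial.aeval M q = Polynomial.aeval M q * x := by
  have hc : Commute x M := h
  rw [Polynomial.aeval_eq_sum_range, Finset.mul_sum, Finset.sum_mul]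
  refine Finset.sum_congr rfl fun i _ => ?_
  rw [mul_smul_comm, smul_mul_assoc, (hc.pow_right i).eq]

open Matrix in
lemma transpose_aeval_J {m : Type*} [Fintype m] [DecidableEq m]
    (M J : Matrix m m k) (h : Mᵀ * J = J * M) (q : k[X]) :
    (Polynomial.aeval M q)ᵀ * J = J * Polynomial.aeval M q := by
  rw [Polynomial.aeval_eq_sum_range (p := q) M, Matrix.transpose_sum, Finset.sum_mul,
    Finset.mul_sum]
  have key : ∀ i : ℕ, Mᵀ ^ i * J = J * M ^ i := by
    intro i
    induction i with
    | zero => simp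
    | succ i ih => rw [pow_succ, mul_assoc, h, ← mul_assoc, ih, mul_assoc, pow_succ]
  refine Finset.sum_congr rfl fun i _ => ?_
  rw [Matrix.transpose_smul, smul_mul_assoc, mul_smul_comm, Matrix.transpose_pow, key]

open Matrix in
lemma exists_matrix_sqrt {m : Type*} [Fintype m] [DecidableEq m]
    (M : Matrix m m k) (hM : IsUnit M.det) :
    ∃ q : k[X], Polynomial.aeval M q * Polynomial.aeval M q = M := by
  have hint : IsIntegral k M := IsIntegral.of_finite k M
  set f := minpoly k M with hfdef
  have hfm : f.Monic := minpoly.monic hint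
  have hf0 : f ≠ 0 := hfm.ne_zero
  have hX : ¬ X ∣ f := by
    rintro ⟨g', hg'⟩
    have hg'0 : g' ≠ 0 := by rintro rfl; rw [mul_zero] at hg'; exact hf0 hg'
    have hann : Polynomial.aeval M f = 0 := minpoly.aeval k M
    rw [hg', _root_.map_mul, Polynomial.aeval_X] at hann
    have hMu : IsUnit M := (Matrix.isUnit_iff_isUnit_det M).2 hM
    have hg'ann : Polynomial.aeval M g' = 0 := by
      have := congrArg (fun N => M⁻¹ * N) hann
      simpa [← mul_assoc, Matrix.nonsing_inv_mul M hM] using this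
    have hdvd : f ∣ g' := minpoly.dvd k M hg'ann
    have hle := Polynomial.natDegree_le_of_dvd hdvd hg'0
    have hdeg : f.natDegree = g'.natDegree + 1 := by
      rw [hg', Polynomial.natDegree_mul Polynomial.X_ne_zero hg'0,
        Polynomial.natDegree_X, add_comm]
    omega
  obtain ⟨q, hq⟩ := exists_sqrt_poly hf0 hX
  refine ⟨q, ?_⟩
  obtain ⟨e, he⟩ := hq
  have : Polynomial.aeval M (q * q - X) = 0 := by
    rw [he, _root_.map_mul, minpoly.aeval, zero_mul]
  rw [map_sub, _root_.map_mul, Polynomial.aeval_X, sub_eq_zero] at this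
  exact this

end Helpers

/-- Two semisimple elements of `GSp_{2n}(k)`, `k` algebraically closed of characteristic
zero, are `GSp_{2n}(k)`-conjugate iff they have the same symplectic multiplier and are
`GL_{2n}(k)`-conjugate. -/
theorem gsp_conjugacy {k : Type*} [Field k] [IsAlgClosed k] [CharZero k]
    {n : ℕ} (hn : 1 ≤ n) (x y : Mat n k) (νx νy : k)
    (hx : inGSp n x νx) (hy : inGSp n y νy)
    (hxd : IsDiagonalizable x) (hyd : IsDiagonalizable y) :
    (∃ (g : Mat n k) (νg : k), inGSp n g νg ∧ g * x * g⁻¹ = y) ↔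
      (νx = νy ∧ ∃ g : Mat n k, IsUnit g.det ∧ g * x * g⁻¹ = y) := by
  obtain ⟨hxdet, hνx, hxJ⟩ := hx
  obtain ⟨hydet, hνy, hyJ⟩ := hy
  set J : Mat n k := Jmat n k with hJdef
  have hJJ : J * J = -1 := by
    rw [hJdef, Jmat, fromBlocks_multiply]
    simp only [Matrix.mul_one, Matrix.mul_zero, Matrix.zero_mul, Matrix.one_mul,
      add_zero, zero_add, Matrix.neg_mul, Matrix.mul_neg]
    rw [← neg_zero, ← Matrix.fromBlocks_neg, ← fromBlocks_one]
    rw [neg_zero]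
  have hJdet : IsUnit J.det :=
    Matrix.isUnit_det_of_right_inverse (B := -J) (by rw [Matrix.mul_neg, hJJ, neg_neg])
  have hJT : Jᵀ = -J := by
    rw [hJdef, Jmat, fromBlocks_transpose]
    simp [fromBlocks_neg]
  have hcancel : ∀ a b : k, a • J = b • J → a = b := by
    intro a b hab
    have h1 := congrFun (congrFun hab (Sum.inl ⟨0, hn⟩)) (Sum.inr ⟨0, hn⟩)
    simpa [hJdef, Jmat, Matrix.smul_apply, Matrix.one_apply] using h1
  have hxT : IsUnit xᵀ.det := by rwa [Matrix.det_transpose]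
  constructor
  · rintro ⟨g, νg, ⟨hgdet, hνg, hgJ⟩, hconj⟩
    refine ⟨?_, g, hgdet, hconj⟩
    have hgT : IsUnit gᵀ.det := by rwa [Matrix.det_transpose]
    have hginv : (gᵀ)⁻¹ * J * g⁻¹ = νg⁻¹ • J := by
      have h1 : (gᵀ)⁻¹ * (gᵀ * J * g) * g⁻¹ = (gᵀ)⁻¹ * (νg • J) * g⁻¹ := by rw [hgJ]
      have h2 : (gᵀ)⁻¹ * (gᵀ * J * g) * g⁻¹ = J := by
        calc (gᵀ)⁻¹ * (gᵀ * J * g) * g⁻¹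
            = (gᵀ)⁻¹ * (gᵀ * (J * (g * g⁻¹))) := by simp only [mul_assoc]
          _ = J := by
              rw [Matrix.mul_nonsing_inv _ hgdet, mul_one, ← mul_assoc,
                Matrix.nonsing_inv_mul _ hgT, one_mul]
      have h3 : (gᵀ)⁻¹ * (νg • J) * g⁻¹ = νg • ((gᵀ)⁻¹ * J * g⁻¹) := by
        simp only [Matrix.mul_smul, Matrix.smul_mul]
      rw [h2, h3] at h1
      calc (gᵀ)⁻¹ * J * g⁻¹ = νg⁻¹ • (νg • ((gᵀ)⁻¹ * J * g⁻¹)) := by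
            rw [smul_smul, inv_mul_cancel₀ hνg, one_smul]
        _ = νg⁻¹ • J := by rw [← h1]
    have hg1 : ∀ R : Mat n k, gᵀ * (J * (g * R)) = νg • (J * R) := by
      intro R
      calc gᵀ * (J * (g * R)) = (gᵀ * J * g) * R := by simp only [mul_assoc]
        _ = νg • (J * R) := by rw [hgJ, Matrix.smul_mul]
    have hx1 : ∀ R : Mat n k, xᵀ * (J * (x * R)) = νx • (J * R) := by
      intro R
      calc xᵀ * (J * (x * R)) = (xᵀ * J * x) * R := by simp only [mul_assoc]
        _ = νx • (J * R) := by rw [hxJ, Matrix.smul_mul]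
    have e2 : yᵀ * J * y = (νg * (νx * νg⁻¹)) • J := by
      rw [← hconj]
      calc (g * x * g⁻¹)ᵀ * J * (g * x * g⁻¹)
          = (gᵀ)⁻¹ * (xᵀ * (gᵀ * (J * (g * (x * g⁻¹))))) := by
            rw [Matrix.transpose_mul, Matrix.transpose_mul, Matrix.transpose_nonsing_inv]
            simp only [mul_assoc]
        _ = (gᵀ)⁻¹ * (xᵀ * (νg • (J * (x * g⁻¹)))) := by rw [hg1]
        _ = νg • ((gᵀ)⁻¹ * (xᵀ * (J * (x * g⁻¹)))) := by simp only [Matrix.mul_smul]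
        _ = νg • ((gᵀ)⁻¹ * (νx • (J * g⁻¹))) := by rw [hx1]
        _ = (νg * νx) • ((gᵀ)⁻¹ * (J * g⁻¹)) := by
            simp only [Matrix.mul_smul, smul_smul]
        _ = (νg * νx) • ((gᵀ)⁻¹ * J * g⁻¹) := by simp only [mul_assoc]
        _ = (νg * νx) • (νg⁻¹ • J) := by rw [hginv]
        _ = (νg * (νx * νg⁻¹)) • J := by rw [smul_smul, mul_assoc]
    have hkey := hcancel _ _ (e2.symm.trans hyJ)
    rw [← hkey]
    field_simp
  · rintro ⟨hν, h, hhdet, hconj⟩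
    have hhT : IsUnit hᵀ.det := by rwa [Matrix.det_transpose]
    have hxy : h * x = y * h := by
      calc h * x = (h * x * h⁻¹) * h := by
            rw [mul_assoc (h * x), Matrix.nonsing_inv_mul _ hhdet, mul_one]
        _ = y * h := by rw [hconj]
    set K : Mat n k := hᵀ * J * h with hKdef
    have hK : xᵀ * K * x = νx • K := by
      calc xᵀ * K * x = (h * x)ᵀ * J * (h * x) := by
            rw [Matrix.transpose_mul]
            simp only [hKdef, mul_assoc]
        _ = (y * h)ᵀ * J * (y * h) := by rw [hxy]
        _ = hᵀ * ((yᵀ * J * y) * h) := by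
            rw [Matrix.transpose_mul]
            simp only [mul_assoc]
        _ = hᵀ * ((νy • J) * h) := by rw [hyJ]
        _ = νy • K := by
            simp only [Matrix.mul_smul, Matrix.smul_mul, hKdef, mul_assoc]
        _ = νx • K := by rw [hν]
    have hKdet : IsUnit K.det := by
      rw [hKdef]
      simp only [Matrix.det_mul, Matrix.det_transpose]
      exact (hhdet.mul hJdet).mul hhdet
    set M : Mat n k := J * K with hMdef
    have hMdet : IsUnit M.det := by
      rw [hMdef, Matrix.det_mul]; exact hJdet.mul hKdet
    have h2K : K * x = νx • ((xᵀ)⁻¹ * K) := by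
      calc K * x = ((xᵀ)⁻¹ * xᵀ) * (K * x) := by
            rw [Matrix.nonsing_inv_mul _ hxT, one_mul]
        _ = (xᵀ)⁻¹ * (xᵀ * K * x) := by simp only [mul_assoc]
        _ = νx • ((xᵀ)⁻¹ * K) := by rw [hK, Matrix.mul_smul]
    have h2J : J * x = νx • ((xᵀ)⁻¹ * J) := by
      calc J * x = ((xᵀ)⁻¹ * xᵀ) * (J * x) := by
            rw [Matrix.nonsing_inv_mul _ hxT, one_mul]
        _ = (xᵀ)⁻¹ * (xᵀ * J * x) := by simp only [mul_assoc]
        _ = νx • ((xᵀ)⁻¹ * J) := by rw [hxJ, Matrix.mul_smul]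
    have h3 : x * J = νx • (J * (xᵀ)⁻¹) := by
      have e := congrArg (fun N => J * N * J) h2J
      beta_reduce at e
      have l : J * (J * x) * J = -(x * J) := by
        calc J * (J * x) * J = (J * J) * (x * J) := by simp only [mul_assoc]
          _ = -(x * J) := by rw [hJJ, Matrix.neg_mul, one_mul]
      have r : J * (νx • ((xᵀ)⁻¹ * J)) * J = -(νx • (J * (xᵀ)⁻¹)) := by
        calc J * (νx • ((xᵀ)⁻¹ * J)) * J
            = νx • (J * ((xᵀ)⁻¹ * (J * J))) := by
              simp only [Matrix.mul_smul, Matrix.smul_mul, mul_assoc]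
          _ = -(νx • (J * (xᵀ)⁻¹)) := by
              rw [hJJ, Matrix.mul_neg, mul_one, Matrix.mul_neg, smul_neg]
      rw [l, r] at e
      exact neg_injective e
    have hxM : x * M = M * x := by
      rw [hMdef]
      calc x * (J * K) = (x * J) * K := by simp only [mul_assoc]
        _ = (νx • (J * (xᵀ)⁻¹)) * K := by rw [h3]
        _ = J * (νx • ((xᵀ)⁻¹ * K)) := by
            simp only [Matrix.smul_mul, Matrix.mul_smul, mul_assoc]
        _ = J * (K * x) := by rw [← h2K]
        _ = (J * K) * x := by simp only [mul_assoc]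
    have hKT : Kᵀ = -K := by
      rw [hKdef, Matrix.transpose_mul, Matrix.transpose_mul, Matrix.transpose_transpose,
        hJT]
      simp only [Matrix.neg_mul, Matrix.mul_neg, mul_assoc]
    have hMTJ : Mᵀ * J = J * M := by
      rw [hMdef]
      calc (J * K)ᵀ * J = (Kᵀ * Jᵀ) * J := by rw [Matrix.transpose_mul]
        _ = ((-K) * (-J)) * J := by rw [hKT, hJT]
        _ = K * (J * J) := by simp only [Matrix.neg_mul, Matrix.mul_neg, neg_neg, mul_assoc]
        _ = (J * J) * K := by rw [hJJ, Matrix.mul_neg, mul_one, Matrix.neg_mul, one_mul]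
        _ = J * (J * K) := by simp only [mul_assoc]
    obtain ⟨q, hq⟩ := exists_matrix_sqrt M hMdet
    set c : Mat n k := Polynomial.aeval M q with hcdef
    have hcx : x * c = c * x := commute_aeval x M hxM q
    have hcJ : cᵀ * J = J * c := transpose_aeval_J M J hMTJ q
    have hcdet : IsUnit c.det := by
      have h1 : IsUnit (c.det * c.det) := by rw [← Matrix.det_mul, hq]; exact hMdet
      exact isUnit_of_mul_isUnit_left h1
    have hcT : IsUnit cᵀ.det := by rwa [Matrix.det_transpose]
    have hcJc : cᵀ * J * c = -K := by
      calc cᵀ * J * c = (J * c) * c := by rw [hcJ]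
        _ = J * M := by rw [mul_assoc, hq]
        _ = -K := by rw [hMdef, ← mul_assoc, hJJ, Matrix.neg_mul, one_mul]
    refine ⟨h * c⁻¹, -1, ⟨?_, ?_, ?_⟩, ?_⟩
    · rw [Matrix.det_mul]
      exact hhdet.mul (Matrix.isUnit_nonsing_inv_det c hcdet)
    · exact neg_ne_zero.2 one_ne_zero
    · have hKc : K = -(cᵀ * J * c) := by rw [hcJc, neg_neg]
      calc (h * c⁻¹)ᵀ * J * (h * c⁻¹)
          = (c⁻¹)ᵀ * ((hᵀ * J * h) * c⁻¹) := by
            rw [Matrix.transpose_mul]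
            simp only [mul_assoc]
        _ = (c⁻¹)ᵀ * (K * c⁻¹) := by rw [← hKdef]
        _ = (c⁻¹)ᵀ * (-(cᵀ * J * c) * c⁻¹) := by rw [← hKc]
        _ = -((cᵀ)⁻¹ * (cᵀ * (J * (c * c⁻¹)))) := by
            rw [Matrix.transpose_nonsing_inv]
            simp only [Matrix.neg_mul, Matrix.mul_neg, mul_assoc]
        _ = -J := by
            rw [Matrix.mul_nonsing_inv _ hcdet, mul_one, ← mul_assoc,
              Matrix.nonsing_inv_mul _ hcT, one_mul]
        _ = (-1 : k) • J := by rw [neg_one_smul]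
    · rw [Matrix.mul_inv_rev, Matrix.nonsing_inv_nonsing_inv c hcdet]
      calc (h * c⁻¹) * x * (c * h⁻¹)
          = h * (c⁻¹ * ((x * c) * h⁻¹)) := by simp only [mul_assoc]
        _ = h * (c⁻¹ * ((c * x) * h⁻¹)) := by rw [hcx]
        _ = h * ((c⁻¹ * c) * (x * h⁻¹)) := by simp only [mul_assoc]
        _ = h * x * h⁻¹ := by
            rw [Matrix.nonsing_inv_mul _ hcdet, one_mul, mul_assoc]
        _ = y := hconj
end
end

section
/- Let n ≥ 1, let k = (k_1, …, k_n) be a regular tuple of integers, and let J ∈ GL_{2n}(ℂ) satisfy J D_k(w) J^{−1} = D_k(w)^{−1} for every w ∈ ℂ×. Then J has 2×2 block anti-diagonal form J = [[0, s], [s', 0]] (with n×n blocks), where s and s' are invertible diagonal n×n matrices. -/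
open Matrix

noncomputable section

/-- `D_k(w) = diag(w^{k_1}, …, w^{k_n}, w^{-k_1}, …, w^{-k_n})`. -/
def Dk {n : ℕ} (kk : Fin n → ℤ) (w : ℂ) : Mat n ℂ :=
  Matrix.diagonal (Sum.elim (fun i => w ^ kk i) (fun i => w ^ (-kk i)))

/-- A tuple `(k_1, …, k_n)` of integers is regular if each `k_i` is nonzero and
`k_i ≠ ±k_j` for all `i ≠ j`. -/
def Regular {n : ℕ} (kk : Fin n → ℤ) : Prop :=
  (∀ i, kk i ≠ 0) ∧ ∀ i j, i ≠ j → kk i ≠ kk j ∧ kk i ≠ -kk j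

lemma two_zpow_inj : Function.Injective fun m : ℤ => (2 : ℂ) ^ m := by
  intro m m' h
  have habs : (2 : ℝ) ^ m = (2 : ℝ) ^ m' := by
    have := congrArg (fun z : ℂ => ‖z‖) h
    simpa [map_zpow₀, norm_zpow] using this
  exact zpow_right_injective₀ (by norm_num) (by norm_num) habs

/-- If `J` is invertible and `J D_k(w) J⁻¹ = D_k(w)⁻¹` for all `w ∈ ℂ×`, then `J` is
block anti-diagonal, `J = [[0, s], [s', 0]]` with `s`, `s'` invertible diagonal. -/
theorem conj_to_inverse_block_form (n : ℕ) (hn : 1 ≤ n) (kk : Fin n → ℤ)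
    (hreg : Regular kk) (J : Mat n ℂ) (hJ : IsUnit J.det)
    (hconj : ∀ w : ℂ, w ≠ 0 → J * Dk kk w * J⁻¹ = (Dk kk w)⁻¹) :
    ∃ s s' : Fin n → ℂ, (∀ i, s i ≠ 0) ∧ (∀ i, s' i ≠ 0) ∧
      J = fromBlocks 0 (Matrix.diagonal s) (Matrix.diagonal s') 0 := by
  set e : Fin n ⊕ Fin n → ℤ := Sum.elim kk (fun i => -kk i) with he
  have hDk : ∀ w : ℂ, Dk kk w = Matrix.diagonal (fun a => w ^ e a) := by
    intro w; unfold Dk; congr 1; funext a; cases a <;> rfl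
  -- the inverse of Dk
  have hDkinv : ∀ w : ℂ, w ≠ 0 → (Dk kk w)⁻¹ = Matrix.diagonal (fun a => w ^ (-e a)) := by
    intro w hw
    apply Matrix.inv_eq_right_inv
    rw [hDk, Matrix.diagonal_mul_diagonal]
    convert Matrix.diagonal_one
    rw [← zpow_add₀ hw]
    simp
  have key : ∀ a b, e a + e b ≠ 0 → J a b = 0 := by
    intro a b hab
    have h2 : (2 : ℂ) ≠ 0 := by norm_num
    have h := hconj 2 h2
    have h' : J * Dk kk 2 = (Dk kk 2)⁻¹ * J := by
      calc J * Dk kk 2 = (J * Dk kk 2 * J⁻¹) * J := by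
            rw [Matrix.mul_assoc, Matrix.nonsing_inv_mul J hJ, Matrix.mul_one]
        _ = (Dk kk 2)⁻¹ * J := by rw [h]
    have hent := congrFun (congrFun h' a) b
    rw [hDkinv 2 h2, hDk, Matrix.mul_diagonal, Matrix.diagonal_mul] at hent
    -- J a b * 2^(e b) = 2^(-e a) * J a b
    by_contra hne
    have h3 : (2 : ℂ) ^ e b = (2 : ℂ) ^ (-e a) :=
      mul_right_cancel₀ hne (by rw [mul_comm ((2 : ℂ) ^ e b)]; exact hent)
    have := two_zpow_inj h3
    omega
  set s : Fin n → ℂ := fun i => J (Sum.inl i) (Sum.inr i) with hs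
  set s' : Fin n → ℂ := fun i => J (Sum.inr i) (Sum.inl i) with hs'
  have hform : J = fromBlocks 0 (Matrix.diagonal s) (Matrix.diagonal s') 0 := by
    ext a b
    rcases a with i | i <;> rcases b with j | j
    · have : J (Sum.inl i) (Sum.inl j) = 0 := by
        apply key
        simp only [he, Sum.elim_inl]
        rcases eq_or_ne i j with rfl | hij
        · have := hreg.1 i; omega
        · have := (hreg.2 i j hij).2; omega
      simpa [fromBlocks] using this
    · rcases eq_or_ne i j with rfl | hij
      · simp [fromBlocks, Matrix.diagonal, hs]
      · have : J (Sum.inl i) (Sum.inr j) = 0 := by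
          apply key
          simp only [he, Sum.elim_inl, Sum.elim_inr]
          have := (hreg.2 i j hij).1; omega
        simp [fromBlocks, Matrix.diagonal, hij, this]
    · rcases eq_or_ne i j with rfl | hij
      · simp [fromBlocks, Matrix.diagonal, hs']
      · have : J (Sum.inr i) (Sum.inl j) = 0 := by
          apply key
          simp only [he, Sum.elim_inl, Sum.elim_inr]
          have := (hreg.2 j i hij.symm).1; omega
        simp [fromBlocks, Matrix.diagonal, hij, this]
    · have : J (Sum.inr i) (Sum.inr j) = 0 := by
        apply key
        simp only [he, Sum.elim_inr]
        rcases eq_or_ne i j with rfl | hij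
        · have := hreg.1 i; omega
        · have := (hreg.2 j i hij.symm).2; omega
      simpa [fromBlocks] using this
  refine ⟨s, s', ?_, ?_, hform⟩
  · intro i hi
    have hrow : ∀ b, J (Sum.inl i) b = 0 := by
      intro b
      rw [hform]
      rcases b with j | j
      · simp [fromBlocks]
      · rcases eq_or_ne i j with rfl | hij
        · simpa [fromBlocks, Matrix.diagonal] using hi
        · simp [fromBlocks, Matrix.diagonal, hij]
    have : J.det = 0 := Matrix.det_eq_zero_of_row_eq_zero (Sum.inl i) hrow
    exact (isUnit_iff_ne_zero.mp hJ) this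
  · intro i hi
    have hrow : ∀ b, J (Sum.inr i) b = 0 := by
      intro b
      rw [hform]
      rcases b with j | j
      · rcases eq_or_ne i j with rfl | hij
        · simpa [fromBlocks, Matrix.diagonal] using hi
        · simp [fromBlocks, Matrix.diagonal, hij]
      · simp [fromBlocks]
    have : J.det = 0 := Matrix.det_eq_zero_of_row_eq_zero (Sum.inr i) hrow
    exact (isUnit_iff_ne_zero.mp hJ) this
end
end

section
/- Let n ≥ 1 and let k = (k_1, …, k_n) be a regular tuple of integers. There exists J ∈ GSO_{2n}(ℂ) satisfying J D_k(w) J^{−1} = D_k(w)^{−1} for every w ∈ ℂ× and J² = 1 if and only if n is even; moreover every such J has multiplier ν(J) = 1. -/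
open Matrix

noncomputable section

/-- The standard split symmetric form matrix `Q_{2n} = [[0, 1], [1, 0]]`. -/
def Qmat (n : ℕ) : Mat n ℂ := fromBlocks 0 1 1 0

/-- `A ∈ GO_{2n}(ℂ)` with multiplier `ν`. -/
def inGO (n : ℕ) (A : Mat n ℂ) (ν : ℂ) : Prop :=
  IsUnit A.det ∧ ν ≠ 0 ∧ Aᵀ * Qmat n * A = ν • Qmat n

/-- `A ∈ GSO_{2n}(ℂ)` with multiplier `ν`: in `GO_{2n}` and `det A = ν ^ n`. -/
def inGSO (n : ℕ) (A : Mat n ℂ) (ν : ℂ) : Prop :=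
  inGO n A ν ∧ A.det = ν ^ n

lemma Qmat_transpose (n : ℕ) : (Qmat n)ᵀ = Qmat n := by
  simp [Qmat, fromBlocks_transpose]

lemma Qmat_sq (n : ℕ) : Qmat n * Qmat n = 1 := by
  rw [Qmat, fromBlocks_multiply]
  simp [← fromBlocks_one]

def sumToProd (n : ℕ) : (Fin n ⊕ Fin n) ≃ (Fin n × Bool) where
  toFun := Sum.elim (fun i => (i, false)) (fun i => (i, true))
  invFun := fun p => if p.2 then Sum.inr p.1 else Sum.inl p.1
  left_inv := by rintro (i | i) <;> simp
  right_inv := by rintro ⟨i, (_ | _)⟩ <;> simp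

lemma sign_sumComm (n : ℕ) :
    Equiv.Perm.sign (Equiv.sumComm (Fin n) (Fin n)) = (-1) ^ n := by
  have h := Equiv.Perm.sign_eq_sign_of_equiv
    (Equiv.sumComm (Fin n) (Fin n))
    (Equiv.prodCongrRight fun _ : Fin n => Equiv.swap false true)
    (sumToProd n) ?_
  · rw [h, Equiv.Perm.sign_prodCongrRight]
    simp [Equiv.Perm.sign_swap]
  · rintro (i | i) <;>
      simp [sumToProd, Equiv.prodCongrRight, Equiv.swap_apply_left, Equiv.swap_apply_right]

lemma Qmat_eq_permMatrix (n : ℕ) :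
    Qmat n = Equiv.Perm.permMatrix ℂ (Equiv.sumComm (Fin n) (Fin n) : Equiv.Perm (Fin n ⊕ Fin n)) := by
  ext a b
  rcases a with i | i <;> rcases b with j | j <;>
    simp [Qmat, Equiv.Perm.permMatrix, PEquiv.toMatrix_apply, Equiv.toPEquiv_apply,
      one_apply, eq_comm]

lemma Qmat_det (n : ℕ) : (Qmat n).det = (-1) ^ n := by
  rw [Qmat_eq_permMatrix, Matrix.det_permutation, sign_sumComm]
  push_cast
  ring

lemma Dk_inv {n : ℕ} (kk : Fin n → ℤ) (w : ℂ) (hw : w ≠ 0) :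
    (Dk kk w)⁻¹ = Dk (fun i => -kk i) w := by
  apply Matrix.inv_eq_right_inv
  rw [Dk, Dk, Matrix.diagonal_mul_diagonal]
  convert Matrix.diagonal_one with x
  rcases x with i | i <;>
    simp only [Sum.elim_inl, Sum.elim_inr, neg_neg, ← zpow_add₀ hw] <;>
    simp

lemma two_zpow_inj_s7 {m m' : ℤ} (h : (2 : ℂ) ^ m = (2 : ℂ) ^ m') : m = m' := by
  have habs : (2 : ℝ) ^ m = (2 : ℝ) ^ m' := by
    have := congrArg (fun z : ℂ => ‖z‖) h
    simpa [map_zpow₀, norm_zpow] using this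
  exact zpow_right_injective₀ (by norm_num) (by norm_num) habs

lemma classify (n : ℕ) (kk : Fin n → ℤ) (hreg : Regular kk) (J : Mat n ℂ)
    (hconj : ∀ w : ℂ, w ≠ 0 → J * Dk kk w * J⁻¹ = (Dk kk w)⁻¹) (hsq : J * J = 1) :
    ∃ B C : Fin n → ℂ, (∀ i, B i * C i = 1) ∧
      J = fromBlocks 0 (diagonal B) (diagonal C) 0 := by
  have hJinv : J⁻¹ = J := Matrix.inv_eq_right_inv hsq
  set e : Fin n ⊕ Fin n → ℤ := Sum.elim kk (fun i => -kk i) with he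
  have h2 : J * Dk kk 2 = Dk (fun i => -kk i) 2 * J := by
    have h := hconj 2 two_ne_zero
    rw [hJinv, Dk_inv kk 2 two_ne_zero] at h
    have h' : (J * Dk kk 2 * J) * J = Dk (fun i => -kk i) 2 * J := by rw [h]
    rwa [mul_assoc, hsq, mul_one] at h'
  have hent : ∀ a b, J a b * (2 : ℂ) ^ e b = (2 : ℂ) ^ (-(e a)) * J a b := by
    intro a b
    have h := congr_fun (congr_fun h2 a) b
    rw [Dk, Dk, Matrix.mul_diagonal, Matrix.diagonal_mul] at h
    rcases a with i | i <;> rcases b with j | j <;> simpa [he] using h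
  have hzero : ∀ a b, e b ≠ -(e a) → J a b = 0 := by
    intro a b hne
    by_contra hab
    refine hne (two_zpow_inj_s7 ?_)
    have h := hent a b
    rw [mul_comm (J a b)] at h
    exact mul_right_cancel₀ hab h
  have hJ : J = fromBlocks 0 (diagonal fun i => J (Sum.inl i) (Sum.inr i))
      (diagonal fun i => J (Sum.inr i) (Sum.inl i)) 0 := by
    ext a b
    rcases a with i | i <;> rcases b with j | j
    · simp only [fromBlocks_apply₁₁, Matrix.zero_apply]
      apply hzero
      simp only [he, Sum.elim_inl]
      rcases eq_or_ne i j with rfl | hij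
      · have := hreg.1 i; omega
      · have := (hreg.2 j i (Ne.symm hij)).2; omega
    · simp only [fromBlocks_apply₁₂]
      rcases eq_or_ne i j with rfl | hij
      · rw [Matrix.diagonal_apply_eq]
      · rw [Matrix.diagonal_apply_ne _ hij]
        apply hzero
        simp only [he, Sum.elim_inl, Sum.elim_inr]
        have := (hreg.2 j i (Ne.symm hij)).1; omega
    · simp only [fromBlocks_apply₂₁]
      rcases eq_or_ne i j with rfl | hij
      · rw [Matrix.diagonal_apply_eq]
      · rw [Matrix.diagonal_apply_ne _ hij]
        apply hzero
        simp only [he, Sum.elim_inl, Sum.elim_inr]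
        have := (hreg.2 j i (Ne.symm hij)).1; omega
    · simp only [fromBlocks_apply₂₂, Matrix.zero_apply]
      apply hzero
      simp only [he, Sum.elim_inr]
      rcases eq_or_ne i j with rfl | hij
      · have := hreg.1 i; omega
      · have := (hreg.2 i j hij).2; omega
  refine ⟨_, _, ?_, hJ⟩
  intro i
  have h := hsq
  rw [hJ, fromBlocks_multiply] at h
  have h' := congr_fun (congr_fun h (Sum.inl i)) (Sum.inl i)
  simpa [Matrix.diagonal_mul_diagonal, Matrix.one_apply] using h'

lemma nu_det (n : ℕ) (hn : 1 ≤ n) (kk : Fin n → ℤ) (hreg : Regular kk)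
    (J : Mat n ℂ) (ν : ℂ) (hGO : inGO n J ν)
    (hconj : ∀ w : ℂ, w ≠ 0 → J * Dk kk w * J⁻¹ = (Dk kk w)⁻¹) (hsq : J * J = 1) :
    ν = 1 ∧ J.det = (-1 : ℂ) ^ n := by
  obtain ⟨B, C, hBC, hJ⟩ := classify n kk hreg J hconj hsq
  set i0 : Fin n := ⟨0, hn⟩
  have horth : fromBlocks 0 (diagonal C * diagonal B) (diagonal B * diagonal C) 0
      = ν • Qmat n := by
    have h := hGO.2.2
    rw [hJ, Qmat, fromBlocks_transpose, fromBlocks_multiply, fromBlocks_multiply] at h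
    simpa [Qmat] using h
  have hν : C i0 * B i0 = ν := by
    have h := congr_fun (congr_fun horth (Sum.inl i0)) (Sum.inr i0)
    simpa [Qmat, Matrix.diagonal_mul_diagonal, Matrix.one_apply] using h
  have hν1 : ν = 1 := by rw [← hν, mul_comm]; exact hBC i0
  refine ⟨hν1, ?_⟩
  have hfact : J = Qmat n * fromBlocks (diagonal C) 0 0 (diagonal B) := by
    rw [hJ, Qmat, fromBlocks_multiply]
    simp
  rw [hfact, det_mul, Qmat_det, Matrix.det_fromBlocks_zero₂₁, det_diagonal, det_diagonal]
  have hone : (∏ i, C i) * ∏ i, B i = 1 := by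
    rw [← Finset.prod_mul_distrib]
    have : ∀ i ∈ Finset.univ, C i * B i = 1 := fun i _ => by rw [mul_comm]; exact hBC i
    rw [Finset.prod_congr rfl this, Finset.prod_const_one]
  rw [hone, mul_one]

/-- There exists `J ∈ GSO_{2n}(ℂ)` with `J D_k(w) J⁻¹ = D_k(w)⁻¹` for all `w ∈ ℂ×` and
`J² = 1` iff `n` is even; moreover every such `J` has multiplier `1`. -/
theorem gso_involution (n : ℕ) (hn : 1 ≤ n) (kk : Fin n → ℤ) (hreg : Regular kk) :
    ((∃ (J : Mat n ℂ) (ν : ℂ), inGSO n J ν ∧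
        (∀ w : ℂ, w ≠ 0 → J * Dk kk w * J⁻¹ = (Dk kk w)⁻¹) ∧ J * J = 1) ↔ Even n) ∧
    (∀ (J : Mat n ℂ) (ν : ℂ), inGSO n J ν →
        (∀ w : ℂ, w ≠ 0 → J * Dk kk w * J⁻¹ = (Dk kk w)⁻¹) → J * J = 1 → ν = 1) := by
  constructor
  · constructor
    · rintro ⟨J, ν, ⟨hGO, hdetν⟩, hconj, hsq⟩
      obtain ⟨hν1, hdet⟩ := nu_det n hn kk hreg J ν hGO hconj hsq
      have hpow : ((-1 : ℂ)) ^ n = 1 := by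
        rw [← hdet, hdetν, hν1, one_pow]
      exact (neg_one_pow_eq_one_iff_even (by norm_num : (-1 : ℂ) ≠ 1)).mp hpow
    · intro heven
      have hQinv : (Qmat n)⁻¹ = Qmat n := Matrix.inv_eq_right_inv (Qmat_sq n)
      refine ⟨Qmat n, 1, ⟨⟨?_, one_ne_zero, ?_⟩, ?_⟩, ?_, Qmat_sq n⟩
      · rw [Qmat_det, heven.neg_one_pow]; exact isUnit_one
      · rw [Qmat_transpose, Qmat_sq, one_mul, one_smul]
      · rw [Qmat_det, heven.neg_one_pow, one_pow]
      · intro w hw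
        rw [hQinv, Dk_inv kk w hw, Dk, Dk, ← Matrix.fromBlocks_diagonal,
          ← Matrix.fromBlocks_diagonal, Qmat, fromBlocks_multiply, fromBlocks_multiply]
        simp [neg_neg]
  · intro J ν hGSO hconj hsq
    exact (nu_det n hn kk hreg J ν hGSO.1 hconj hsq).1
end
end

section
/- Let n ≥ 1, let k = (k_1, …, k_n) be a regular tuple of integers, and let h denote the 2n×2n permutation matrix swapping the n-th and 2n-th standard basis vectors and fixing all others. Suppose J ∈ GO_{2n}(ℂ) satisfies (Jh) D_k(w) (Jh)^{−1} = D_k(w)^{−1} for every w ∈ ℂ× and (Jh)² = 1. Then ν(J) = 1 and det J = (−1)^{n+1}; consequently J lies in GSO_{2n}(ℂ) if and only if n is odd. -/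
open Matrix

noncomputable section

/-- The 2n×2n permutation matrix swapping the n-th and 2n-th standard basis vectors
(i.e. the basis vectors indexed by `Sum.inl (n-1)` and `Sum.inr (n-1)`) and fixing
all others. -/
def hmat (n : ℕ) (hn : 0 < n) : Mat n ℂ :=
  Matrix.of fun i j =>
    if j = Equiv.swap (Sum.inl (⟨n - 1, by omega⟩ : Fin n))
        (Sum.inr (⟨n - 1, by omega⟩ : Fin n)) i then 1 else 0

lemma two_zpow_eq_one_aux {m : ℤ} (h : (2 : ℂ) ^ m = 1) : m = 0 := by
  have h0 : ‖(2 : ℂ) ^ m‖ = 1 := by rw [h]; simp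
  rw [Complex.norm_zpow, Complex.norm_two] at h0
  have h1 : (2 : ℝ) ^ m = (2 : ℝ) ^ (0 : ℤ) := by simpa using h0
  exact zpow_right_injective₀ (by norm_num : (0:ℝ) < 2) (by norm_num) h1

/-- If `J ∈ GO_{2n}(ℂ)` with `(Jh) D_k(w) (Jh)⁻¹ = D_k(w)⁻¹` for all `w ∈ ℂ×` and
`(Jh)² = 1`, then `ν(J) = 1` and `det J = (-1)^(n+1)`; hence `J ∈ GSO_{2n}(ℂ)` iff
`n` is odd. -/
theorem go_h_involution (n : ℕ) (hn : 0 < n) (kk : Fin n → ℤ) (hreg : Regular kk)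
    (J : Mat n ℂ) (ν : ℂ) (hJ : inGO n J ν)
    (hconj : ∀ w : ℂ, w ≠ 0 →
      (J * hmat n hn) * Dk kk w * (J * hmat n hn)⁻¹ = (Dk kk w)⁻¹)
    (hsq : (J * hmat n hn) * (J * hmat n hn) = 1) :
    ν = 1 ∧ J.det = (-1) ^ (n + 1) ∧ (inGSO n J ν ↔ Odd n) := by
  set m : Fin n := ⟨n - 1, by omega⟩ with hm
  set T : Mat n ℂ := J * hmat n hn with hTdef
  set σ : Equiv.Perm (Fin n ⊕ Fin n) := Equiv.swap (Sum.inl m) (Sum.inr m) with hσ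
  set τ : Equiv.Perm (Fin n ⊕ Fin n) := Equiv.sumComm (Fin n) (Fin n) with hτ
  -- h as permutation matrix
  have hmat_eq : hmat n hn = σ.toPEquiv.toMatrix := by
    have h0 : hmat n hn = Matrix.of fun i j => if j = σ i then 1 else 0 := rfl
    rw [h0]
    ext i j
    by_cases hij : j = σ i
    · simp [PEquiv.toMatrix, Equiv.toPEquiv_apply, Option.mem_def, hij]
    · simp [PEquiv.toMatrix, Equiv.toPEquiv_apply, Option.mem_def, hij, Ne.symm hij]
  have hQ_eq : Qmat n = τ.toPEquiv.toMatrix := by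
    ext i j
    rcases i with i | i <;> rcases j with j | j <;>
      simp [Qmat, PEquiv.toMatrix, Equiv.toPEquiv_apply, Option.mem_def, fromBlocks,
        Matrix.one_apply, eq_comm, hτ]
  have hh : hmat n hn * hmat n hn = 1 := by
    rw [hmat_eq, ← PEquiv.toMatrix_trans, ← Equiv.toPEquiv_trans, hσ, Equiv.swap_swap,
      Equiv.toPEquiv_refl, PEquiv.toMatrix_refl]
  have hTr : (hmat n hn)ᵀ = hmat n hn := by
    rw [hmat_eq, ← PEquiv.toMatrix_symm, ← Equiv.toPEquiv_symm, hσ, Equiv.symm_swap]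
  -- inverse facts
  have hTinv : T⁻¹ = T := Matrix.inv_eq_right_inv hsq
  have hDinv : ∀ w : ℂ, w ≠ 0 → (Dk kk w)⁻¹ = Dk kk w⁻¹ := by
    intro w hw
    apply Matrix.inv_eq_right_inv
    ext a b
    rw [Dk, Dk, diagonal_mul_diagonal]
    rcases eq_or_ne a b with rfl | hab
    · rw [diagonal_apply_eq, Matrix.one_apply_eq]
      rcases a with i | i
      · show w ^ kk i * w⁻¹ ^ kk i = 1
        rw [_root_.inv_zpow, mul_inv_cancel₀ (zpow_ne_zero _ hw)]
      · show w ^ (-kk i) * w⁻¹ ^ (-kk i) = 1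
        rw [_root_.inv_zpow, mul_inv_cancel₀ (zpow_ne_zero _ hw)]
    · rw [diagonal_apply_ne _ hab, Matrix.one_apply_ne hab]
  have hTD : ∀ w : ℂ, w ≠ 0 → T * Dk kk w = Dk kk w⁻¹ * T := by
    intro w hw
    have h1 := hconj w hw
    rw [hTinv, hDinv w hw] at h1
    calc T * Dk kk w = T * Dk kk w * (T * T) := by rw [hsq, mul_one]
      _ = (T * Dk kk w * T) * T := by noncomm_ring
      _ = Dk kk w⁻¹ * T := by rw [h1]
  -- entries of T vanish away from the antidiagonal blocks
  set e : Fin n ⊕ Fin n → ℤ := Sum.elim kk (fun i => -kk i) with he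
  have helim : ∀ (w : ℂ) (x : Fin n ⊕ Fin n),
      Sum.elim (fun i => w ^ kk i) (fun i => w ^ (-kk i)) x = w ^ e x := by
    rintro w (x | x) <;> rfl
  have hent : ∀ a b, e a + e b ≠ 0 → T a b = 0 := by
    intro a b hab
    by_contra hzero
    have h2 := hTD 2 (by norm_num)
    have h3 : (T * Dk kk 2) a b = (Dk kk (2 : ℂ)⁻¹ * T) a b := by rw [h2]
    rw [Dk, Dk, Matrix.mul_diagonal, Matrix.diagonal_mul, helim, helim] at h3
    rw [_root_.inv_zpow'] at h3
    have h5 : (2:ℂ) ^ e b = (2:ℂ) ^ (-(e a)) := by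
      have h3' : (2:ℂ) ^ e b * T a b = (2:ℂ) ^ (-(e a)) * T a b := by
        rw [mul_comm ((2:ℂ) ^ e b) (T a b)]
        rw [h3, mul_comm]
      exact mul_right_cancel₀ hzero h3'

    have h6 : (2:ℂ) ^ (e a + e b) = 1 := by
      rw [zpow_add₀ (by norm_num : (2:ℂ) ≠ 0), h5, ← zpow_add₀ (by norm_num : (2:ℂ) ≠ 0)]
      simp
    exact hab (two_zpow_eq_one_aux h6)
  -- block structure
  set B : Matrix (Fin n) (Fin n) ℂ := diagonal (fun i => T (Sum.inl i) (Sum.inr i)) with hB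
  set C : Matrix (Fin n) (Fin n) ℂ := diagonal (fun i => T (Sum.inr i) (Sum.inl i)) with hC
  have hsum : ∀ i j : Fin n, kk i + kk j ≠ 0 := by
    intro i j
    rcases eq_or_ne i j with rfl | hij
    · have := hreg.1 i; omega
    · have := (hreg.2 i j hij).2; omega
  have hdiff : ∀ i j : Fin n, i ≠ j → kk i - kk j ≠ 0 := by
    intro i j hij
    have := (hreg.2 i j hij).1; omega
  have hent_ll : ∀ i j : Fin n, T (Sum.inl i) (Sum.inl j) = 0 := by
    intro i j
    apply hent
    simp only [he, Sum.elim_inl]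
    exact hsum i j
  have hent_rr : ∀ i j : Fin n, T (Sum.inr i) (Sum.inr j) = 0 := by
    intro i j
    apply hent
    simp only [he, Sum.elim_inr]
    have := hsum i j
    omega
  have hent_lr : ∀ i j : Fin n, i ≠ j → T (Sum.inl i) (Sum.inr j) = 0 := by
    intro i j hij
    apply hent
    simp only [he, Sum.elim_inl, Sum.elim_inr]
    have := hdiff i j hij
    omega
  have hent_rl : ∀ i j : Fin n, i ≠ j → T (Sum.inr i) (Sum.inl j) = 0 := by
    intro i j hij
    apply hent
    simp only [he, Sum.elim_inl, Sum.elim_inr]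
    have := hdiff j i (Ne.symm hij)
    omega
  have hTblock : T = fromBlocks 0 B C 0 := by
    ext a b
    rcases a with i | i <;> rcases b with j | j
    · rw [hent_ll i j]
      simp [fromBlocks]
    · rcases eq_or_ne i j with rfl | hij
      · simp [fromBlocks, hB, diagonal_apply_eq]
      · rw [hent_lr i j hij]
        simp [fromBlocks, hB, diagonal_apply_ne _ hij]
    · rcases eq_or_ne i j with rfl | hij
      · simp [fromBlocks, hC, diagonal_apply_eq]
      · rw [hent_rl i j hij]
        simp [fromBlocks, hC, diagonal_apply_ne _ hij]
    · rw [hent_rr i j]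
      simp [fromBlocks]
  -- B * C = 1 and C * B = 1
  have hsq' : fromBlocks (B * C) 0 0 (C * B) =
      fromBlocks (1 : Matrix (Fin n) (Fin n) ℂ) 0 0 (1 : Matrix (Fin n) (Fin n) ℂ) := by
    rw [fromBlocks_one]
    rw [hTblock, fromBlocks_multiply] at hsq
    simpa using hsq
  have hBC : B * C = 1 := by
    have h := congrArg Matrix.toBlocks₁₁ hsq'
    rwa [Matrix.toBlocks_fromBlocks₁₁, Matrix.toBlocks_fromBlocks₁₁] at h
  have hCB : C * B = 1 := by
    have h := congrArg Matrix.toBlocks₂₂ hsq'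
    rwa [Matrix.toBlocks_fromBlocks₂₂, Matrix.toBlocks_fromBlocks₂₂] at h
  -- determinant of Q
  have hdetQ : (Qmat n).det = (-1 : ℂ) ^ n := by
    have e1 : Qmat n = fromBlocks 1 1 0 1 * fromBlocks 1 0 (-1) 1 * fromBlocks 1 1 0 1 *
        fromBlocks (-1) 0 0 1 := by
      rw [Qmat, fromBlocks_multiply, fromBlocks_multiply, fromBlocks_multiply]
      simp
    rw [e1, det_mul, det_mul, det_mul]
    simp [det_fromBlocks_zero₂₁, det_fromBlocks_zero₁₂, Matrix.det_neg]
  -- determinant of T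
  have hfact : fromBlocks (0 : Matrix (Fin n) (Fin n) ℂ) B C 0 =
      fromBlocks B 0 0 C * Qmat n := by
    rw [Qmat, fromBlocks_multiply]
    simp
  have hdetT : T.det = (-1 : ℂ) ^ n := by
    rw [hTblock, hfact, det_mul, det_fromBlocks_zero₁₂, hdetQ, ← det_mul, hBC, det_one, one_mul]
  -- determinant of h
  have hdeth : (hmat n hn).det = -1 := by
    rw [hmat_eq]
    have : (σ.toPEquiv.toMatrix : Mat n ℂ) = σ.permMatrix ℂ := rfl
    rw [this, Matrix.det_permutation, hσ, Equiv.Perm.sign_swap (by simp)]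
    simp
  have hJT : J = T * hmat n hn := by
    rw [hTdef, mul_assoc, hh, mul_one]
  have hdetJ : J.det = (-1 : ℂ) ^ (n + 1) := by
    rw [hJT, det_mul, hdetT, hdeth, pow_succ]
  -- Tᵀ Q T = Q
  have hBt : Bᵀ = B := diagonal_transpose _
  have hCt : Cᵀ = C := diagonal_transpose _
  have hTQT : Tᵀ * Qmat n * T = Qmat n := by
    rw [hTblock, Qmat, fromBlocks_transpose, fromBlocks_multiply, fromBlocks_multiply]
    simp [hBt, hCt, hBC, hCB]
  -- h Q h = ν Q
  have hkey : hmat n hn * (Tᵀ * Qmat n * T) * hmat n hn = ν • Qmat n := by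
    have h1 := hJ.2.2
    rw [hJT, transpose_mul, hTr] at h1
    simp only [mul_assoc] at h1 ⊢
    exact h1
  rw [hTQT] at hkey
  -- h and Q commute
  have hperm : σ.trans τ = τ.trans σ := by
    ext x
    rcases x with x | x <;> rcases eq_or_ne x m with rfl | hx
    · simp [hσ, hτ, Equiv.swap_apply_def]
    · simp [hσ, hτ, Equiv.swap_apply_def, hx]
    · simp [hσ, hτ, Equiv.swap_apply_def]
    · simp [hσ, hτ, Equiv.swap_apply_def, hx]
  have hcomm : hmat n hn * Qmat n = Qmat n * hmat n hn := by
    rw [hmat_eq, hQ_eq, ← PEquiv.toMatrix_trans, ← PEquiv.toMatrix_trans,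
      ← Equiv.toPEquiv_trans, ← Equiv.toPEquiv_trans, hperm]
  have hQQ : hmat n hn * Qmat n * hmat n hn = Qmat n := by
    rw [hcomm, mul_assoc, hh, mul_one]
  rw [hQQ] at hkey
  -- ν = 1
  set z : Fin n := ⟨0, hn⟩ with hz
  have hν : ν = 1 := by
    have h1 := congrFun (congrFun hkey (Sum.inl z)) (Sum.inr z)
    simp [Qmat, fromBlocks, Matrix.one_apply, Matrix.smul_apply] at h1
    exact h1.symm
  refine ⟨hν, hdetJ, ?_, ?_⟩
  · intro hgso
    have h1 : ((-1 : ℂ)) ^ (n + 1) = 1 := by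
      rw [← hdetJ, hgso.2, hν, one_pow]
    have h2 : Even (n + 1) :=
      (neg_one_pow_eq_one_iff_even (by norm_num : (-1 : ℂ) ≠ 1)).mp h1
    rcases h2 with ⟨t, ht⟩
    exact ⟨t - 1, by omega⟩
  · intro hodd
    refine ⟨hJ, ?_⟩
    rw [hdetJ, hν, one_pow]
    have h2 : Even (n + 1) := by rcases hodd with ⟨t, ht⟩; exact ⟨t + 1, by omega⟩
    exact (neg_one_pow_eq_one_iff_even (by norm_num : (-1 : ℂ) ≠ 1)).mpr h2
end
end

section
/- Let N ≥ 1 and let Γ_N = {(z, w) ∈ ℂ× × ℂ× : z^N = w²}, a subgroup of ℂ× × ℂ×. If N is odd, then the map t ↦ (t², t^N) is a group isomorphism from ℂ× onto Γ_N. If N is even, then the map (t, ε) ↦ (t, ε t^{N/2}) is a group isomorphism from ℂ× × {±1} onto Γ_N; in particular Γ_N ≅ ℂ× × ℤ/2ℤ. -/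
noncomputable section

/-- The subgroup `Γ_N = {(z, w) ∈ ℂ× × ℂ× : z^N = w²}` of `ℂ× × ℂ×`. -/
def GammaN (N : ℕ) : Subgroup (ℂˣ × ℂˣ) where
  carrier := {p | p.1 ^ N = p.2 ^ 2}
  one_mem' := by simp
  mul_mem' := by
    intro a b ha hb
    simp only [Set.mem_setOf_eq] at *
    simp [Prod.fst_mul, Prod.snd_mul, mul_pow, ha, hb]
  inv_mem' := by
    intro a ha
    simp only [Set.mem_setOf_eq] at *
    simp [Prod.fst_inv, Prod.snd_inv, ha]

/-- The subgroup `{±1}` of `ℂ×` of order 2. -/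
def pmOne : Subgroup ℂˣ := Subgroup.zpowers (-1 : ℂˣ)

lemma units_sq_eq_one {u : ℂˣ} (h : u ^ 2 = 1) : u = 1 ∨ u = -1 := by
  have h' : (u : ℂ) ^ 2 = 1 := by
    have := congrArg Units.val h; push_cast at this; exact this
  rcases sq_eq_one_iff.mp h' with h1 | h1
  · left; ext; simpa using h1
  · right; ext; simpa using h1

lemma pmOne_val (x : pmOne) : (x : ℂˣ) = 1 ∨ (x : ℂˣ) = -1 := by
  obtain ⟨k, hk⟩ := x.2
  refine units_sq_eq_one ?_
  rw [← hk, ← zpow_natCast, ← zpow_mul, mul_comm, zpow_mul, zpow_natCast,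
    neg_one_sq, one_zpow]

lemma pmOne_sq (x : pmOne) : (x : ℂˣ) ^ 2 = 1 := by
  rcases pmOne_val x with h | h <;> rw [h] <;> norm_num

lemma neg_one_ne_one' : (-1 : ℂˣ) ≠ 1 := by
  intro h
  have := congrArg Units.val h
  norm_num at this

def pmEquiv : pmOne ≃* Multiplicative (ZMod 2) where
  toFun x := if (x : ℂˣ) = 1 then 1 else Multiplicative.ofAdd 1
  invFun y := if y = 1 then (1 : pmOne) else ⟨-1, Subgroup.mem_zpowers _⟩
  left_inv x := by
    dsimp only
    rcases pmOne_val x with h | h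
    · rw [if_pos h, if_pos rfl]; ext; simp [h]
    · rw [h, if_neg neg_one_ne_one', if_neg (by decide)]
      ext; simp [h]
  right_inv y := by
    dsimp only
    have h2 : ∀ z : Multiplicative (ZMod 2), z = 1 ∨ z = Multiplicative.ofAdd 1 := by decide
    rcases h2 y with h | h <;> subst h
    · simp
    · rw [if_neg (show (Multiplicative.ofAdd (1 : ZMod 2)) ≠ 1 by decide)]
      rw [if_neg (show ((⟨-1, Subgroup.mem_zpowers _⟩ : pmOne) : ℂˣ) ≠ 1 from neg_one_ne_one')]
  map_mul' x y := by
    have hxy : ((x * y : pmOne) : ℂˣ) = (x : ℂˣ) * (y : ℂˣ) := rfl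
    rcases pmOne_val x with hx | hx <;> rcases pmOne_val y with hy | hy <;>
      simp only [hxy, hx, hy, one_mul, mul_one, neg_mul, neg_neg] <;>
      simp [neg_one_ne_one'] <;> decide

/-- The hom for the odd case. -/
def oddHom (N : ℕ) : ℂˣ →* GammaN N where
  toFun t := ⟨(t ^ 2, t ^ N), by
    show (t ^ 2) ^ N = (t ^ N) ^ 2
    rw [← pow_mul, ← pow_mul, mul_comm]⟩
  map_one' := by ext <;> simp
  map_mul' a b := by ext <;> simp [mul_pow]

/-- The hom for the even case, N = 2m. -/
def evenHom (m : ℕ) : ℂˣ × pmOne →* GammaN (2 * m) where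
  toFun p := ⟨(p.1, (p.2 : ℂˣ) * p.1 ^ m), by
    show p.1 ^ (2 * m) = ((p.2 : ℂˣ) * p.1 ^ m) ^ 2
    rw [mul_pow, pmOne_sq, one_mul, ← pow_mul, mul_comm m 2]⟩
  map_one' := by ext <;> simp
  map_mul' a b := by
    refine Subtype.ext (Prod.ext rfl ?_)
    show ((a.2 * b.2 : pmOne) : ℂˣ) * (a.1 * b.1) ^ m =
        ((a.2 : ℂˣ) * a.1 ^ m) * ((b.2 : ℂˣ) * b.1 ^ m)
    rw [Subgroup.coe_mul, mul_pow, mul_mul_mul_comm]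

/-- If `N` is odd, `t ↦ (t², t^N)` is an isomorphism `ℂ× ≅ Γ_N`; if `N` is even,
`(t, ε) ↦ (t, ε t^{N/2})` is an isomorphism `ℂ× × {±1} ≅ Γ_N`, and in particular
`Γ_N ≅ ℂ× × ℤ/2ℤ`. -/
theorem gammaN_structure (N : ℕ) (hN : 1 ≤ N) :
    (Odd N → ∃ e : ℂˣ ≃* GammaN N,
        ∀ t : ℂˣ, (e t : ℂˣ × ℂˣ) = (t ^ 2, t ^ N)) ∧
    (Even N →
      (∃ e : (ℂˣ × pmOne) ≃* GammaN N,
          ∀ (t : ℂˣ) (ε : pmOne), (e (t, ε) : ℂˣ × ℂˣ) = (t, (ε : ℂˣ) * t ^ (N / 2))) ∧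
      Nonempty (GammaN N ≃* ℂˣ × Multiplicative (ZMod 2))) := by
  constructor
  · intro hodd
    obtain ⟨k, hk⟩ := hodd
    have hbij : Function.Bijective (oddHom N) := by
      constructor
      · intro a b hab
        have h1 : a ^ 2 = b ^ 2 :=
          congrArg (fun x : GammaN N => (x : ℂˣ × ℂˣ).1) hab
        have h2 : a ^ N = b ^ N :=
          congrArg (fun x : GammaN N => (x : ℂˣ × ℂˣ).2) hab
        have hk2 : a ^ (2 * k) = b ^ (2 * k) := by
          rw [pow_mul, pow_mul, h1]
        have : a ^ (2 * k) * a = b ^ (2 * k) * b := by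
          rw [← pow_succ, ← pow_succ, ← hk, h2]
        rw [hk2] at this
        exact mul_left_cancel this
      · rintro ⟨⟨z, w⟩, hzw⟩
        have hzw' : z ^ N = w ^ 2 := hzw
        refine ⟨w * (z ^ k)⁻¹, ?_⟩
        have ht2 : (w * (z ^ k)⁻¹) ^ 2 = z := by
          rw [mul_pow, ← hzw', inv_pow, ← pow_mul, hk]
          rw [pow_succ]
          group
        have htN : (w * (z ^ k)⁻¹) ^ N = w := by
          rw [hk, pow_succ, pow_mul, ht2, mul_comm, inv_mul_cancel_right]
        exact Subtype.ext (Prod.ext ht2 htN)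
    refine ⟨MulEquiv.ofBijective _ hbij, fun t => rfl⟩
  · intro heven
    obtain ⟨m, hm⟩ := heven
    have hm2 : N = 2 * m := by omega
    subst hm2
    have hdiv : 2 * m / 2 = m := by omega
    have hbij : Function.Bijective (evenHom m) := by
      constructor
      · rintro ⟨a, ε⟩ ⟨b, δ⟩ hab
        have h1 : a = b :=
          congrArg (fun x : GammaN (2 * m) => (x : ℂˣ × ℂˣ).1) hab
        have h2 : (ε : ℂˣ) * a ^ m = (δ : ℂˣ) * b ^ m :=
          congrArg (fun x : GammaN (2 * m) => (x : ℂˣ × ℂˣ).2) hab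
        subst h1
        have : (ε : ℂˣ) = (δ : ℂˣ) := mul_right_cancel h2
        exact Prod.ext rfl (Subtype.ext this)
      · rintro ⟨⟨z, w⟩, hzw⟩
        have hzw' : z ^ (2 * m) = w ^ 2 := hzw
        have hsq : (w * (z ^ m)⁻¹) ^ 2 = 1 := by
          rw [mul_pow, inv_pow, ← pow_mul, mul_comm m 2, ← hzw']
          simp
        have hmem : w * (z ^ m)⁻¹ ∈ pmOne := by
          rcases units_sq_eq_one hsq with h | h
          · rw [h]; exact one_mem _
          · rw [h]; exact Subgroup.mem_zpowers _
        refine ⟨(z, ⟨w * (z ^ m)⁻¹, hmem⟩), ?_⟩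
        refine Subtype.ext (Prod.ext rfl ?_)
        show (w * (z ^ m)⁻¹) * z ^ m = w
        rw [inv_mul_cancel_right]
    refine ⟨⟨MulEquiv.ofBijective _ hbij, fun t ε => by rw [hdiv]; rfl⟩, ?_⟩
    exact ⟨((MulEquiv.ofBijective _ hbij).symm).trans
      ((MulEquiv.refl ℂˣ).prodCongr pmEquiv)⟩
end
end
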